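/- Cycle consistency implies deterministic translations (Proposition 5): let κ : X1 → X2 and λ : X2 → X1 be Markov kernels satisfying bidirectional cycle consistency: for every x1 ∈ X1, (κ x1).bind λ = Measure.dirac x1, and for every x2 ∈ X2, (λ x2).bind κ = Measure.dirac x2. Then both kernels are deterministic and mutually inverse: there exist functions f : X1 → X2 and g : X2 → X1 such that κ x1 = Measure.dirac (f x1) for all x1, λ x2 = Measure.dirac (g x2) for all x2, g (f x1) = x1 for all x1, and f (g x2) = x2 for all x2. -/

import Mathlib

open MeasureTheory ProbabilityTheory

lemma prob_singleton_one {X : Type*} [MeasurableSpace X] [MeasurableSingletonClass X]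
    (μ : Measure X) [IsProbabilityMeasure μ] {a : X} (h : μ {a} = 1) :
    μ = Measure.dirac a := by
  ext A hA
  rw [Measure.dirac_apply' _ hA]
  by_cases ha : a ∈ A
  · rw [Set.indicator_of_mem ha]
    refine le_antisymm (prob_le_one) ?_
    calc (1:ENNReal) = μ {a} := h.symm
    _ ≤ μ A := measure_mono (Set.singleton_subset_iff.mpr ha)
  · rw [Set.indicator_of_notMem ha]
    have : μ A ≤ μ {a}ᶜ := measure_mono (fun x hx => by
      simp only [Set.mem_compl_iff, Set.mem_singleton_iff]
      rintro rfl; exact ha hx)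
    have hc : μ {a}ᶜ = 0 := by
      rw [measure_compl (measurableSet_singleton a) (measure_ne_top μ _), h,
        measure_univ]
      simp
    exact le_antisymm (this.trans hc.le) zero_le

lemma exists_dirac_of_bind {X1 X2 : Type*} [MeasurableSpace X1] [MeasurableSpace X2]
    [MeasurableSingletonClass X1]
    (κ : Kernel X1 X2) (lam : Kernel X2 X1)
    [IsMarkovKernel κ] [IsMarkovKernel lam]
    (x1 : X1) (h : (κ x1).bind (fun x2 => lam x2) = Measure.dirac x1) :
    ∃ x2 : X2, lam x2 = Measure.dirac x1 := by
  have hmeas : Measurable fun x2 => lam x2 {x1} := lam.measurable_coe (measurableSet_singleton x1)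
  have hint : ∫⁻ x2, lam x2 {x1} ∂(κ x1) = 1 := by
    have := congrArg (fun μ : Measure X1 => μ {x1}) h
    simpa [Measure.bind_apply (measurableSet_singleton x1) lam.measurable.aemeasurable,
      Measure.dirac_apply' _ (measurableSet_singleton x1)] using this
  have hle : ∀ x2, lam x2 {x1} ≤ 1 := fun x2 => prob_le_one
  have hzero : ∫⁻ x2, (1 - lam x2 {x1}) ∂(κ x1) = 0 := by
    rw [lintegral_sub hmeas (by rw [hint]; exact ENNReal.one_ne_top) (ae_of_all _ hle)]
    simp [hint]
  have hae : ∀ᵐ x2 ∂(κ x1), (1 - lam x2 {x1}) = 0 :=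
    (lintegral_eq_zero_iff (measurable_const.sub hmeas)).mp hzero
  have : ∀ᵐ x2 ∂(κ x1), lam x2 {x1} = 1 := by
    filter_upwards [hae] with x2 hx2
    exact le_antisymm (hle x2) (tsub_eq_zero_iff_le.mp hx2)
  obtain ⟨x2, hx2⟩ := this.exists
  exact ⟨x2, prob_singleton_one _ hx2⟩

lemma dirac_inj' {X : Type*} [MeasurableSpace X] [MeasurableSingletonClass X]
    {a b : X} (hab : Measure.dirac a = Measure.dirac b) : a = b := by
  have := congrArg (fun μ : Measure X => μ {b}) hab
  simp [Measure.dirac_apply' _ (measurableSet_singleton b)] at this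
  by_contra hne
  simp [Set.indicator_of_notMem, hne] at this

/-- Cycle consistency implies deterministic translations (Proposition 5). -/
theorem cycle_consistency_implies_deterministic
    {X1 X2 : Type*} [MeasurableSpace X1] [MeasurableSpace X2]
    [MeasurableSingletonClass X1] [MeasurableSingletonClass X2]
    (κ : Kernel X1 X2) (lam : Kernel X2 X1)
    [IsMarkovKernel κ] [IsMarkovKernel lam]
    (h1 : ∀ x1 : X1, (κ x1).bind (fun x2 => lam x2) = Measure.dirac x1)
    (h2 : ∀ x2 : X2, (lam x2).bind (fun x1 => κ x1) = Measure.dirac x2) :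
    ∃ (f : X1 → X2) (g : X2 → X1),
      (∀ x1 : X1, κ x1 = Measure.dirac (f x1)) ∧
      (∀ x2 : X2, lam x2 = Measure.dirac (g x2)) ∧
      (∀ x1 : X1, g (f x1) = x1) ∧
      (∀ x2 : X2, f (g x2) = x2) := by
  choose f hf using fun x1 => exists_dirac_of_bind κ lam x1 (h1 x1)
  choose g hg using fun x2 => exists_dirac_of_bind lam κ x2 (h2 x2)
  have hκ : ∀ x1, κ x1 = Measure.dirac (f x1) := by
    intro x1
    have := h2 (f x1)
    rw [hf x1] at this
    rw [← this, Measure.dirac_bind κ.measurable x1]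
  have hlam : ∀ x2, lam x2 = Measure.dirac (g x2) := by
    intro x2
    have := h1 (g x2)
    rw [hg x2] at this
    rw [← this, Measure.dirac_bind lam.measurable x2]
  refine ⟨f, g, hκ, hlam, ?_, ?_⟩
  · intro x1
    apply dirac_inj'
    rw [← hlam (f x1), hf x1]
  · intro x2
    apply dirac_inj'
    rw [← hκ (g x2), hg x2]
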